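/- Let G be a group that is a central product G = G_1 * G_2, i.e., G is generated by two commuting subgroups G_1 and G_2 (so [G_1, G_2] = 1 and G = G_1 G_2). Then the Cartan subgroups of G are exactly the subgroups of the form Q_1 * Q_2 = Q_1 Q_2, where Q_i is a Cartan subgroup of G_i for i = 1, 2. -/

import Mathlib

def IsCartan {G : Type*} [Group G] (Q : Subgroup G) : Prop :=
  (Group.IsNilpotent Q ∧ ∀ H : Subgroup G, Group.IsNilpotent H → Q ≤ H → H = Q) ∧
  ∀ X : Subgroup G, X ≤ Q → (X.subgroupOf Q).Normal → (X.subgroupOf Q).FiniteIndex →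
    (X.subgroupOf (Subgroup.normalizer (X : Set G))).FiniteIndex

namespace CartanAux
open Subgroup



variable {P G : Type*} [Group P] [Group G]

lemma nilpotent_map (f : P →* G) (K : Subgroup P) (h : Group.IsNilpotent K) :
    Group.IsNilpotent (K.map f) :=
  @nilpotent_of_surjective _ _ _ _ h (f.subgroupMap K) (f.subgroupMap_surjective K)

lemma nilpotent_comap {f : P →* G} (hker : f.ker ≤ Subgroup.center P) (Q : Subgroup G)
    (h : Group.IsNilpotent Q) : Group.IsNilpotent (Q.comap f) := by
  refine @_root_.isNilpotent_of_ker_le_center _ _ _ _ (f.subgroupComap Q) ?_ h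
  intro x hx
  rw [Subgroup.mem_center_iff]
  intro g
  have hx' : (x : P) ∈ f.ker := by
    rw [MonoidHom.mem_ker]
    have : ((f.subgroupComap Q) x : G) = 1 := by
      rw [hx]; rfl
    exact this
  have := Subgroup.mem_center_iff.mp (hker hx') (g : P)
  exact Subtype.ext this

lemma relindex_comap_eq {f : P →* G} (hf : Function.Surjective f) (H K : Subgroup G) :
    (H.comap f).relIndex (K.comap f) = H.relIndex K := by
  rw [Subgroup.relIndex_comap, Subgroup.map_comap_eq_self_of_surjective hf]

lemma relindex_ne_zero_of_le {H K L : Subgroup G} (h1 : H ≤ K) (h2 : K ≤ L)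
    (h : H.relIndex L ≠ 0) : H.relIndex K ≠ 0 := by
  rw [← Subgroup.relIndex_mul_relIndex H K L h1 h2] at h
  exact fun h0 => h (by rw [h0, zero_mul])

lemma relindex_ne_zero_of_le_left {H H' K : Subgroup G} (h1 : H ≤ H')
    (h : H.relIndex K ≠ 0) : H'.relIndex K ≠ 0 := fun h0 =>
  h (Nat.eq_zero_of_zero_dvd (h0 ▸ Subgroup.relIndex_dvd_of_le_left K h1))

/-- A nilpotent subgroup joined with a central subgroup is nilpotent. -/
lemma nilpotent_sup_of_le_center {Q N : Subgroup G} (hN : N ≤ Subgroup.center G)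
    (hQ : Group.IsNilpotent Q) : Group.IsNilpotent ↥(Q ⊔ N) := by
  haveI hNnormal : N.Normal := by
    constructor
    intro n hn g
    have := Subgroup.mem_center_iff.mp (hN hn) g
    rw [this, mul_assoc, mul_inv_cancel, mul_one]; exact hn
  set K : Subgroup G := Q ⊔ N with hK
  haveI : (N.subgroupOf K).Normal := by
    constructor
    intro n hn g
    have : (g : G) * n * (g : G)⁻¹ ∈ N := hNnormal.conj_mem _ hn _
    simpa [Subgroup.mem_subgroupOf] using this
  refine @_root_.isNilpotent_of_ker_le_center _ _ _ _ (QuotientGroup.mk' (N.subgroupOf K)) ?_ ?_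
  · rw [QuotientGroup.ker_mk']
    intro x hx
    rw [Subgroup.mem_center_iff]
    intro g
    have := Subgroup.mem_center_iff.mp (hN (Subgroup.mem_subgroupOf.mp hx)) (g : G)
    exact Subtype.ext this
  · -- the quotient is a surjective image of Q
    have hQK : Q ≤ K := le_sup_left
    refine @nilpotent_of_surjective _ _ _ _ hQ
      ((QuotientGroup.mk' (N.subgroupOf K)).comp (Subgroup.inclusion hQK)) ?_
    intro y
    obtain ⟨x, rfl⟩ := QuotientGroup.mk'_surjective (N.subgroupOf K) y
    have hx : (x : G) ∈ Q ⊔ N := x.2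
    rw [← SetLike.mem_coe, Subgroup.mul_normal] at hx
    obtain ⟨q, hq, n, hn, hqn⟩ := hx
    refine ⟨⟨q, hq⟩, ?_⟩
    simp only [MonoidHom.comp_apply]
    rw [QuotientGroup.mk'_eq_mk']
    refine ⟨⟨n, ?_⟩, Subgroup.mem_subgroupOf.mpr hn, ?_⟩
    · exact (le_sup_right : N ≤ Q ⊔ N) hn
    · exact Subtype.ext hqn

/-- A maximal nilpotent subgroup contains the center. -/
lemma center_le_max_nilpotent {Q : Subgroup G} (hnil : Group.IsNilpotent Q)
    (hmax : ∀ H : Subgroup G, Group.IsNilpotent H → Q ≤ H → H = Q) :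
    Subgroup.center G ≤ Q := by
  have h := hmax (Q ⊔ Subgroup.center G) (nilpotent_sup_of_le_center le_rfl hnil) le_sup_left
  exact h ▸ le_sup_right

/-- central elements normalize everything -/
lemma mem_normalizer_sup {A B : Subgroup G} {p : G} (ha : p ∈ (Subgroup.normalizer A))
    (hb : p ∈ (Subgroup.normalizer B)) : p ∈ (Subgroup.normalizer ((A ⊔ B : Subgroup G) : Set G)) := by
  have key : ∀ q : G, q ∈ (Subgroup.normalizer A) → q ∈ (Subgroup.normalizer B) →
      ∀ h ∈ A ⊔ B, q * h * q⁻¹ ∈ A ⊔ B := by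
    intro q hqa hqb h hh
    have : A ⊔ B ≤ (A ⊔ B).comap ((MulAut.conj q).toMonoidHom) := by
      refine sup_le ?_ ?_
      · intro a haa
        simp only [Subgroup.mem_comap, MulEquiv.coe_toMonoidHom, MulAut.conj_apply]
        exact (le_sup_left : A ≤ A ⊔ B) ((Subgroup.mem_normalizer_iff.mp hqa a).mp haa)
      · intro b hbb
        simp only [Subgroup.mem_comap, MulEquiv.coe_toMonoidHom, MulAut.conj_apply]
        exact (le_sup_right : B ≤ A ⊔ B) ((Subgroup.mem_normalizer_iff.mp hqb b).mp hbb)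
    have := this hh
    simpa using this
  rw [Subgroup.mem_normalizer_iff]
  intro h
  constructor
  · exact fun hh => key p ha hb h hh
  · intro hh
    have := key p⁻¹ ((Subgroup.normalizer (A : Set G)).inv_mem ha) ((Subgroup.normalizer (B : Set G)).inv_mem hb) _ hh
    simpa [mul_assoc] using this




variable {P₁ P₂ : Type*} [Group P₁] [Group P₂]

lemma map_fst_prod (R₁ : Subgroup P₁) (R₂ : Subgroup P₂) :
    (R₁.prod R₂).map (MonoidHom.fst P₁ P₂) = R₁ := by
  ext x
  constructor
  · rintro ⟨⟨a, b⟩, hab, rfl⟩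
    exact hab.1
  · intro hx
    exact ⟨(x, 1), ⟨hx, R₂.one_mem⟩, rfl⟩

lemma map_snd_prod (R₁ : Subgroup P₁) (R₂ : Subgroup P₂) :
    (R₁.prod R₂).map (MonoidHom.snd P₁ P₂) = R₂ := by
  ext x
  constructor
  · rintro ⟨⟨a, b⟩, hab, rfl⟩
    exact hab.2
  · intro hx
    exact ⟨(1, x), ⟨R₁.one_mem, hx⟩, rfl⟩

lemma le_prod_map (R : Subgroup (P₁ × P₂)) :
    R ≤ (R.map (MonoidHom.fst P₁ P₂)).prod (R.map (MonoidHom.snd P₁ P₂)) := by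
  intro x hx
  exact ⟨⟨x, hx, rfl⟩, ⟨x, hx, rfl⟩⟩

lemma nilpotent_prodSubgroup {R₁ : Subgroup P₁} {R₂ : Subgroup P₂}
    (h₁ : Group.IsNilpotent R₁) (h₂ : Group.IsNilpotent R₂) :
    Group.IsNilpotent ↥(R₁.prod R₂) := by
  haveI := h₁; haveI := h₂
  exact @nilpotent_of_surjective _ _ _ _ (isNilpotent_prod)
    ((R₁.prodEquiv R₂).symm.toMonoidHom) (R₁.prodEquiv R₂).symm.surjective

lemma normalizer_prod (R₁ : Subgroup P₁) (R₂ : Subgroup P₂) :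
    (Subgroup.normalizer (R₁.prod R₂)) = (Subgroup.normalizer (R₁ : Set P₁)).prod (Subgroup.normalizer (R₂ : Set P₂)) := by
  ext ⟨c, d⟩
  simp only [Subgroup.mem_normalizer_iff, Subgroup.mem_prod]
  constructor
  · intro h
    constructor
    · intro x
      have := h (x, 1)
      simpa [Subgroup.mem_prod] using ⟨fun hx => (this.mp ⟨hx, R₂.one_mem⟩).1,
        fun hx => by
          have := (h (x,1)).mpr
          exact ((h (x, 1)).mpr ⟨hx, by simpa using R₂.one_mem⟩).1⟩
    · intro y
      exact ⟨fun hy => ((h (1, y)).mp ⟨R₁.one_mem, hy⟩).2,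
        fun hy => ((h (1, y)).mpr ⟨by simpa using R₁.one_mem, hy⟩).2⟩
  · rintro ⟨hc, hd⟩ ⟨x, y⟩
    exact ⟨fun ⟨hx, hy⟩ => ⟨(hc x).mp hx, (hd y).mp hy⟩,
      fun ⟨hx, hy⟩ => ⟨(hc x).mpr hx, (hd y).mpr hy⟩⟩

lemma relindex_prod {H₁ K₁ : Subgroup P₁} {H₂ K₂ : Subgroup P₂}
    (h₁ : H₁ ≤ K₁) (h₂ : H₂ ≤ K₂) :
    (H₁.prod H₂).relIndex (K₁.prod K₂) = H₁.relIndex K₁ * H₂.relIndex K₂ := by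
  have step1 : (H₁.prod H₂).relIndex (K₁.prod H₂) = H₁.relIndex K₁ := by
    have hinf : (H₁.comap (MonoidHom.fst P₁ P₂)) ⊓ (K₁.prod H₂) = H₁.prod H₂ := by
      ext ⟨x, y⟩
      simp only [Subgroup.mem_inf, Subgroup.mem_comap, Subgroup.mem_prod, MonoidHom.coe_fst]
      exact ⟨fun ⟨ha, hb, hc⟩ => ⟨ha, hc⟩, fun ⟨ha, hb⟩ => ⟨ha, h₁ ha, hb⟩⟩
    rw [← hinf, Subgroup.inf_relIndex_right, Subgroup.relIndex_comap, map_fst_prod]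
  have step2 : (K₁.prod H₂).relIndex (K₁.prod K₂) = H₂.relIndex K₂ := by
    have hinf : (H₂.comap (MonoidHom.snd P₁ P₂)) ⊓ (K₁.prod K₂) = K₁.prod H₂ := by
      ext ⟨x, y⟩
      simp only [Subgroup.mem_inf, Subgroup.mem_comap, Subgroup.mem_prod, MonoidHom.coe_snd]
      exact ⟨fun ⟨ha, hb, hc⟩ => ⟨hb, ha⟩, fun ⟨ha, hb⟩ => ⟨hb, ha, h₂ hb⟩⟩
    rw [← hinf, Subgroup.inf_relIndex_right, Subgroup.relIndex_comap, map_snd_prod]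
  rw [← step1, ← step2]
  exact (Subgroup.relIndex_mul_relIndex _ _ _
    (Subgroup.prod_mono le_rfl le_rfl |>.trans (Subgroup.prod_mono h₁ le_rfl))
    (Subgroup.prod_mono le_rfl h₂)).symm




variable {P₁ P₂ G : Type*} [Group P₁] [Group P₂] [Group G]


lemma finiteIndex_iff {H : Subgroup G} : H.FiniteIndex ↔ H.index ≠ 0 :=
  ⟨fun h => h.index_ne_zero, fun h => ⟨h⟩⟩

lemma subgroupOf_index_eq_relindex (H K : Subgroup G) :
    (H.subgroupOf K).index = H.relIndex K := rfl

/-- B7 : product of relatively normal subgroups is relatively normal in the product -/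
lemma prod_subgroupOf_normal {X₁ R₁ : Subgroup P₁} {X₂ R₂ : Subgroup P₂}
    (hX₁ : X₁ ≤ R₁) (hX₂ : X₂ ≤ R₂)
    (h₁ : (X₁.subgroupOf R₁).Normal) (h₂ : (X₂.subgroupOf R₂).Normal) :
    ((X₁.prod X₂).subgroupOf (R₁.prod R₂)).Normal := by
  constructor
  rintro ⟨⟨a, b⟩, hab⟩ hn ⟨⟨c, d⟩, hcd⟩
  rw [Subgroup.mem_subgroupOf] at hn ⊢
  obtain ⟨ha, hb⟩ := hn
  refine ⟨?_, ?_⟩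
  · exact h₁.conj_mem ⟨a, hab.1⟩ ha ⟨c, hcd.1⟩
  · exact h₂.conj_mem ⟨b, hab.2⟩ hb ⟨d, hcd.2⟩

/-- B8 : projection of relatively normal subgroup is relatively normal -/
lemma map_fst_subgroupOf_normal {X : Subgroup (P₁ × P₂)} {R₁ : Subgroup P₁} {R₂ : Subgroup P₂}
    (hX : X ≤ R₁.prod R₂) (h : (X.subgroupOf (R₁.prod R₂)).Normal) :
    ((X.map (MonoidHom.fst P₁ P₂)).subgroupOf R₁).Normal := by
  constructor
  rintro ⟨a, haR⟩ hn ⟨c, hcR⟩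
  rw [Subgroup.mem_subgroupOf] at hn ⊢
  obtain ⟨⟨x, y⟩, hxy, hxa⟩ := hn
  simp only [MonoidHom.coe_fst] at hxa
  subst hxa
  have := h.conj_mem ⟨(x, y), hX hxy⟩ (Subgroup.mem_subgroupOf.mpr hxy)
    ⟨(c, 1), ⟨hcR, R₂.one_mem⟩⟩
  rw [Subgroup.mem_subgroupOf] at this
  exact ⟨_, this, rfl⟩

lemma map_snd_subgroupOf_normal {X : Subgroup (P₁ × P₂)} {R₁ : Subgroup P₁} {R₂ : Subgroup P₂}
    (hX : X ≤ R₁.prod R₂) (h : (X.subgroupOf (R₁.prod R₂)).Normal) :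
    ((X.map (MonoidHom.snd P₁ P₂)).subgroupOf R₂).Normal := by
  constructor
  rintro ⟨b, hbR⟩ hn ⟨d, hdR⟩
  rw [Subgroup.mem_subgroupOf] at hn ⊢
  obtain ⟨⟨x, y⟩, hxy, hyb⟩ := hn
  simp only [MonoidHom.coe_snd] at hyb
  subst hyb
  have := h.conj_mem ⟨(x, y), hX hxy⟩ (Subgroup.mem_subgroupOf.mpr hxy)
    ⟨(1, d), ⟨R₁.one_mem, hdR⟩⟩
  rw [Subgroup.mem_subgroupOf] at this
  exact ⟨_, this, rfl⟩

/-- normalizer of X is contained in the product of the normalizers of the projections -/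
lemma normalizer_le_prod_normalizer (X : Subgroup (P₁ × P₂)) :
    (Subgroup.normalizer X) ≤ (Subgroup.normalizer ((X.map (MonoidHom.fst P₁ P₂) : Subgroup P₁) : Set P₁)).prod
      (Subgroup.normalizer ((X.map (MonoidHom.snd P₁ P₂) : Subgroup P₂) : Set P₂)) := by
  rintro ⟨c, d⟩ h
  rw [Subgroup.mem_normalizer_iff] at h
  refine Subgroup.mem_prod.mpr ⟨?_, ?_⟩
  · rw [Subgroup.mem_normalizer_iff]
    intro x
    constructor
    · rintro ⟨⟨x', y⟩, hxy, hx⟩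
      simp only [MonoidHom.coe_fst] at hx
      subst hx
      exact ⟨_, (h (x', y)).mp hxy, rfl⟩
    · rintro ⟨⟨x', y⟩, hxy, hx⟩
      simp only [MonoidHom.coe_fst] at hx
      refine ⟨(c⁻¹ * x' * c, d⁻¹ * y * d), ?_, by simp [hx, mul_assoc]⟩
      have := (h (c⁻¹ * x' * c, d⁻¹ * y * d)).mpr
      simp only [Prod.mk_mul_mk, Prod.inv_mk] at this ⊢
      apply this
      simpa [mul_assoc] using hxy
  · rw [Subgroup.mem_normalizer_iff]
    intro y
    constructor
    · rintro ⟨⟨x, y'⟩, hxy, hy⟩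
      simp only [MonoidHom.coe_snd] at hy
      subst hy
      exact ⟨_, (h (x, y')).mp hxy, rfl⟩
    · rintro ⟨⟨x, y'⟩, hxy, hy⟩
      simp only [MonoidHom.coe_snd] at hy
      refine ⟨(c⁻¹ * x * c, d⁻¹ * y' * d), ?_, by simp [hy, mul_assoc]⟩
      have := (h (c⁻¹ * x * c, d⁻¹ * y' * d)).mpr
      simp only [Prod.mk_mul_mk, Prod.inv_mk] at this ⊢
      apply this
      simpa [mul_assoc] using hxy


end CartanAux

namespace CartanAux
open Subgroup

variable {P₁ P₂ : Type*} [Group P₁] [Group P₂]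

theorem isCartan_prod_iff {R : Subgroup (P₁ × P₂)} :
    IsCartan R ↔ ∃ (R₁ : Subgroup P₁) (R₂ : Subgroup P₂),
      IsCartan R₁ ∧ IsCartan R₂ ∧ R = R₁.prod R₂ := by
  constructor
  · rintro ⟨⟨hnil, hmax⟩, hfi⟩
    set R₁ := R.map (MonoidHom.fst P₁ P₂) with hR₁
    set R₂ := R.map (MonoidHom.snd P₁ P₂) with hR₂
    have hnil₁ : Group.IsNilpotent R₁ := nilpotent_map _ _ hnil
    have hnil₂ : Group.IsNilpotent R₂ := nilpotent_map _ _ hnil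
    have hprod : R = R₁.prod R₂ :=
      (hmax _ (nilpotent_prodSubgroup hnil₁ hnil₂) (le_prod_map R)).symm
    have hmax₁ : ∀ H : Subgroup P₁, Group.IsNilpotent H → R₁ ≤ H → H = R₁ := by
      intro H hH hle
      have h1 : R ≤ H.prod R₂ := le_trans (le_of_eq hprod) (Subgroup.prod_mono hle le_rfl)
      have h2 := hmax _ (nilpotent_prodSubgroup hH hnil₂) h1
      calc H = (H.prod R₂).map (MonoidHom.fst P₁ P₂) := (map_fst_prod H R₂).symm
        _ = R₁ := by rw [h2]
    have hmax₂ : ∀ H : Subgroup P₂, Group.IsNilpotent H → R₂ ≤ H → H = R₂ := by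
      intro H hH hle
      have h1 : R ≤ R₁.prod H := le_trans (le_of_eq hprod) (Subgroup.prod_mono le_rfl hle)
      have h2 := hmax _ (nilpotent_prodSubgroup hnil₁ hH) h1
      calc H = (R₁.prod H).map (MonoidHom.snd P₁ P₂) := (map_snd_prod R₁ H).symm
        _ = R₂ := by rw [h2]
    refine ⟨R₁, R₂, ⟨⟨hnil₁, hmax₁⟩, ?_⟩, ⟨⟨hnil₂, hmax₂⟩, ?_⟩, hprod⟩
    · -- finite index condition for R₁
      intro X₁ hle hnrm hidx
      have hR₂nrm : (R₂.subgroupOf R₂).Normal := by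
        rw [Subgroup.subgroupOf_self]; infer_instance
      have hXle : X₁.prod R₂ ≤ R := by
        rw [hprod]; exact Subgroup.prod_mono hle le_rfl
      have hnrm' : ((X₁.prod R₂).subgroupOf R).Normal := by
        rw [hprod]; exact prod_subgroupOf_normal hle le_rfl hnrm hR₂nrm
      have hidx' : ((X₁.prod R₂).subgroupOf R).FiniteIndex := by
        rw [finiteIndex_iff, subgroupOf_index_eq_relindex, hprod,
          relindex_prod hle le_rfl, Subgroup.relIndex_self, mul_one]
        exact finiteIndex_iff.mp hidx
      have hcon := hfi _ hXle hnrm' hidx'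
      rw [finiteIndex_iff, subgroupOf_index_eq_relindex, normalizer_prod,
        relindex_prod Subgroup.le_normalizer Subgroup.le_normalizer] at hcon
      rw [finiteIndex_iff, subgroupOf_index_eq_relindex]
      exact fun h0 => hcon (by rw [h0, zero_mul])
    · -- finite index condition for R₂
      intro X₂ hle hnrm hidx
      have hR₁nrm : (R₁.subgroupOf R₁).Normal := by
        rw [Subgroup.subgroupOf_self]; infer_instance
      have hXle : R₁.prod X₂ ≤ R := by
        rw [hprod]; exact Subgroup.prod_mono le_rfl hle
      have hnrm' : ((R₁.prod X₂).subgroupOf R).Normal := by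
        rw [hprod]; exact prod_subgroupOf_normal le_rfl hle hR₁nrm hnrm
      have hidx' : ((R₁.prod X₂).subgroupOf R).FiniteIndex := by
        rw [finiteIndex_iff, subgroupOf_index_eq_relindex, hprod,
          relindex_prod le_rfl hle, Subgroup.relIndex_self, one_mul]
        exact finiteIndex_iff.mp hidx
      have hcon := hfi _ hXle hnrm' hidx'
      rw [finiteIndex_iff, subgroupOf_index_eq_relindex, normalizer_prod,
        relindex_prod Subgroup.le_normalizer Subgroup.le_normalizer] at hcon
      rw [finiteIndex_iff, subgroupOf_index_eq_relindex]
      exact fun h0 => hcon (by rw [h0, mul_zero])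
  · rintro ⟨R₁, R₂, ⟨⟨hnil₁, hmax₁⟩, hfi₁⟩, ⟨⟨hnil₂, hmax₂⟩, hfi₂⟩, rfl⟩
    refine ⟨⟨nilpotent_prodSubgroup hnil₁ hnil₂, ?_⟩, ?_⟩
    · intro N hN hle
      have h1 : R₁ ≤ N.map (MonoidHom.fst P₁ P₂) := by
        have := Subgroup.map_mono (f := MonoidHom.fst P₁ P₂) hle
        rwa [map_fst_prod] at this
      have h2 : R₂ ≤ N.map (MonoidHom.snd P₁ P₂) := by
        have := Subgroup.map_mono (f := MonoidHom.snd P₁ P₂) hle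
        rwa [map_snd_prod] at this
      have e1 := hmax₁ _ (nilpotent_map _ _ hN) h1
      have e2 := hmax₂ _ (nilpotent_map _ _ hN) h2
      refine le_antisymm ?_ hle
      calc N ≤ (N.map (MonoidHom.fst P₁ P₂)).prod (N.map (MonoidHom.snd P₁ P₂)) :=
            le_prod_map N
        _ = R₁.prod R₂ := by rw [e1, e2]
    · intro X hle hnrm hidx
      set X₁ := X.map (MonoidHom.fst P₁ P₂) with hX₁
      set X₂ := X.map (MonoidHom.snd P₁ P₂) with hX₂
      have hX₁R : X₁ ≤ R₁ := by
        have := Subgroup.map_mono (f := MonoidHom.fst P₁ P₂) hle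
        rwa [map_fst_prod] at this
      have hX₂R : X₂ ≤ R₂ := by
        have := Subgroup.map_mono (f := MonoidHom.snd P₁ P₂) hle
        rwa [map_snd_prod] at this
      have hnrm₁ := map_fst_subgroupOf_normal hle hnrm
      have hnrm₂ := map_snd_subgroupOf_normal hle hnrm
      have hrel : X.relIndex (R₁.prod R₂) ≠ 0 := finiteIndex_iff.mp hidx
      have hXle' : X ≤ X₁.prod X₂ := le_prod_map X
      have h12 : X₁.prod X₂ ≤ R₁.prod R₂ := Subgroup.prod_mono hX₁R hX₂R
      have hrel2 : (X₁.prod X₂).relIndex (R₁.prod R₂) ≠ 0 :=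
        relindex_ne_zero_of_le_left hXle' hrel
      rw [relindex_prod hX₁R hX₂R] at hrel2
      have hrel₁ : X₁.relIndex R₁ ≠ 0 := fun h0 => hrel2 (by rw [h0, zero_mul])
      have hrel₂ : X₂.relIndex R₂ ≠ 0 := fun h0 => hrel2 (by rw [h0, mul_zero])
      have hN₁ := hfi₁ X₁ hX₁R hnrm₁ ⟨hrel₁⟩
      have hN₂ := hfi₂ X₂ hX₂R hnrm₂ ⟨hrel₂⟩
      have hn₁ : X₁.relIndex (Subgroup.normalizer X₁) ≠ 0 := hN₁.index_ne_zero
      have hn₂ : X₂.relIndex (Subgroup.normalizer X₂) ≠ 0 := hN₂.index_ne_zero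
      have hchain1 : X.relIndex (X₁.prod X₂) ≠ 0 :=
        relindex_ne_zero_of_le hXle' h12 hrel
      have hbig : X.relIndex ((Subgroup.normalizer (X₁ : Set P₁)).prod (Subgroup.normalizer (X₂ : Set P₂))) ≠ 0 := by
        rw [← Subgroup.relIndex_mul_relIndex X (X₁.prod X₂) _ hXle'
          (Subgroup.prod_mono Subgroup.le_normalizer Subgroup.le_normalizer),
          relindex_prod Subgroup.le_normalizer Subgroup.le_normalizer]
        exact Nat.mul_ne_zero hchain1 (Nat.mul_ne_zero hn₁ hn₂)
      have hfinal : X.relIndex (Subgroup.normalizer X) ≠ 0 :=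
        relindex_ne_zero_of_le Subgroup.le_normalizer
          (normalizer_le_prod_normalizer X) hbig
      exact ⟨hfinal⟩

end CartanAux

namespace CartanAux
open Subgroup

variable {P G : Type*} [Group P] [Group G]

theorem isCartan_comap_iff {f : P →* G} (hf : Function.Surjective f)
    (hker : f.ker ≤ Subgroup.center P) (Q : Subgroup G) :
    IsCartan (Q.comap f) ↔ IsCartan Q := by
  have hmapQ : (Q.comap f).map f = Q := Subgroup.map_comap_eq_self_of_surjective hf Q
  constructor
  · rintro ⟨⟨hnil, hmax⟩, hfi⟩
    have hnilQ : Group.IsNilpotent Q := hmapQ ▸ nilpotent_map f _ hnil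
    refine ⟨⟨hnilQ, ?_⟩, ?_⟩
    · intro N hN hle
      have h1 : Q.comap f ≤ N.comap f := Subgroup.comap_mono hle
      have h2 := hmax _ (nilpotent_comap hker N hN) h1
      calc N = (N.comap f).map f := (Subgroup.map_comap_eq_self_of_surjective hf N).symm
        _ = Q := by rw [h2, hmapQ]
    · intro X hle hnrm hidx
      have hX'le : X.comap f ≤ Q.comap f := Subgroup.comap_mono hle
      have hnrm' : ((X.comap f).subgroupOf (Q.comap f)).Normal := by
        constructor
        rintro ⟨x, hxQ⟩ hx ⟨g, hgQ⟩
        rw [Subgroup.mem_subgroupOf] at hx ⊢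
        have := hnrm.conj_mem ⟨f x, hxQ⟩ hx ⟨f g, hgQ⟩
        rw [Subgroup.mem_subgroupOf] at this
        simpa [Subgroup.mem_comap, map_mul, map_inv] using this
      have hidx' : ((X.comap f).subgroupOf (Q.comap f)).FiniteIndex := by
        rw [finiteIndex_iff, subgroupOf_index_eq_relindex, relindex_comap_eq hf]
        exact finiteIndex_iff.mp hidx
      have hcon := hfi _ hX'le hnrm' hidx'
      rw [finiteIndex_iff, subgroupOf_index_eq_relindex,
        ← Subgroup.comap_normalizer_eq_of_surjective X hf, relindex_comap_eq hf] at hcon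
      exact ⟨hcon⟩
  · rintro ⟨⟨hnilQ, hmaxQ⟩, hfiQ⟩
    have hkerQ : f.ker ≤ Q.comap f := fun x hx => by
      rw [Subgroup.mem_comap, MonoidHom.mem_ker.mp hx]; exact Q.one_mem
    refine ⟨⟨nilpotent_comap hker Q hnilQ, ?_⟩, ?_⟩
    · intro N hN hle
      have h1 : Q ≤ N.map f := hmapQ ▸ Subgroup.map_mono hle
      have h2 := hmaxQ _ (nilpotent_map f N hN) h1
      have h3 : (N.map f).comap f = N := by
        rw [Subgroup.comap_map_eq]
        exact sup_eq_left.mpr (le_trans hkerQ hle)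
      rw [← h3, h2]
    · intro X' hX'le hnrm' hidx'
      set X := X'.map f with hX
      have hXQ : X ≤ Q := hmapQ ▸ Subgroup.map_mono hX'le
      have hcomapX : X.comap f = X' ⊔ f.ker := Subgroup.comap_map_eq f X'
      have hnrm : (X.subgroupOf Q).Normal := by
        constructor
        rintro ⟨x, hxQ⟩ hx ⟨g, hgQ⟩
        rw [Subgroup.mem_subgroupOf] at hx ⊢
        obtain ⟨x', hx', hfx⟩ := hx
        obtain ⟨p, rfl⟩ := hf g
        have hpQ : p ∈ Q.comap f := Subgroup.mem_comap.mpr hgQ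
        have := hnrm'.conj_mem ⟨x', hX'le hx'⟩ (Subgroup.mem_subgroupOf.mpr hx') ⟨p, hpQ⟩
        rw [Subgroup.mem_subgroupOf] at this
        refine ⟨p * x' * p⁻¹, this, ?_⟩
        simp [map_mul, map_inv, hfx]
      have hrelX' : X'.relIndex (Q.comap f) ≠ 0 := finiteIndex_iff.mp hidx'
      have hrelXQ : X.relIndex Q ≠ 0 := by
        have h1 : (X.comap f).relIndex (Q.comap f) ≠ 0 := by
          rw [hcomapX]
          exact relindex_ne_zero_of_le_left le_sup_left hrelX'
        rwa [relindex_comap_eq hf] at h1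
      have hQcond := hfiQ X hXQ hnrm ⟨hrelXQ⟩
      have hrelXN : X.relIndex (Subgroup.normalizer X) ≠ 0 := hQcond.index_ne_zero
      -- transfer back
      have hXleC : X' ≤ X.comap f := by rw [hcomapX]; exact le_sup_left
      have hCle : X.comap f ≤ Q.comap f := Subgroup.comap_mono hXQ
      have hrel1 : X'.relIndex (X.comap f) ≠ 0 :=
        relindex_ne_zero_of_le hXleC hCle hrelX'
      have hrel2 : X'.relIndex ((Subgroup.normalizer X).comap f) ≠ 0 := by
        rw [← Subgroup.relIndex_mul_relIndex X' (X.comap f) _ hXleC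
          (Subgroup.comap_mono Subgroup.le_normalizer)]
        exact Nat.mul_ne_zero hrel1 (by rw [relindex_comap_eq hf]; exact hrelXN)
      have hNle : (Subgroup.normalizer X') ≤ (Subgroup.normalizer X).comap f := by
        rw [Subgroup.comap_normalizer_eq_of_surjective X hf, hcomapX]
        intro p hp
        refine mem_normalizer_sup hp ?_
        have : (Subgroup.normalizer (f.ker : Set P)) = ⊤ := Subgroup.normalizer_eq_top_iff.mpr f.normal_ker
        rw [this]; trivial
      have hfinal : X'.relIndex (Subgroup.normalizer X') ≠ 0 :=
        relindex_ne_zero_of_le Subgroup.le_normalizer hNle hrel2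
      exact ⟨hfinal⟩

end CartanAux

theorem cartan_stmt5 {G : Type*} [Group G] (G₁ G₂ : Subgroup G)
    (hcomm : ∀ a ∈ G₁, ∀ b ∈ G₂, Commute a b)
    (hgen : ∀ g : G, ∃ a ∈ G₁, ∃ b ∈ G₂, g = a * b)
    (Q : Subgroup G) :
    IsCartan Q ↔
      ∃ (Q₁ : Subgroup G₁) (Q₂ : Subgroup G₂),
        IsCartan Q₁ ∧ IsCartan Q₂ ∧ Q = Q₁.map G₁.subtype ⊔ Q₂.map G₂.subtype := by
  let φ : ↥G₁ × ↥G₂ →* G := MonoidHom.mk' (fun p => (p.1 : G) * p.2) (by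
    rintro ⟨a₁, a₂⟩ ⟨b₁, b₂⟩
    show ((a₁ * b₁ : G₁) : G) * ((a₂ * b₂ : G₂) : G) = _
    push_cast
    have h : Commute (b₁ : G) (a₂ : G) := hcomm _ b₁.2 _ a₂.2
    rw [mul_assoc, ← mul_assoc (b₁ : G), h.eq]
    simp [mul_assoc])
  have hφ : ∀ p : ↥G₁ × ↥G₂, φ p = (p.1 : G) * p.2 := fun _ => rfl
  have hsurj : Function.Surjective φ := by
    intro g
    obtain ⟨a, ha, b, hb, rfl⟩ := hgen g
    exact ⟨(⟨a, ha⟩, ⟨b, hb⟩), rfl⟩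
  have hkercen : ∀ p ∈ φ.ker, p.1 ∈ Subgroup.center G₁ ∧ p.2 ∈ Subgroup.center G₂ := by
    rintro ⟨a, b⟩ hp
    have hab : (a : G) * b = 1 := hp
    have ha : (a : G) = (b : G)⁻¹ := eq_inv_of_mul_eq_one_left hab
    have hb : (b : G) = (a : G)⁻¹ := eq_inv_of_mul_eq_one_right hab
    constructor
    · rw [Subgroup.mem_center_iff]
      intro g
      refine Subtype.ext ?_
      show (g : G) * a = (a : G) * g
      rw [ha]
      exact ((hcomm _ g.2 _ b.2).inv_right).eq
    · rw [Subgroup.mem_center_iff]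
      intro g
      refine Subtype.ext ?_
      show (g : G) * b = (b : G) * g
      rw [hb]
      exact ((hcomm _ a.2 _ g.2).inv_left).symm.eq
  have hker_center : φ.ker ≤ Subgroup.center (↥G₁ × ↥G₂) := by
    intro p hp
    obtain ⟨h1, h2⟩ := hkercen p hp
    rw [Subgroup.mem_center_iff]
    intro q
    have e1 := Subgroup.mem_center_iff.mp h1 q.1
    have e2 := Subgroup.mem_center_iff.mp h2 q.2
    exact Prod.ext e1 e2
  have hmap : ∀ (R₁ : Subgroup G₁) (R₂ : Subgroup G₂),
      (R₁.prod R₂).map φ = R₁.map G₁.subtype ⊔ R₂.map G₂.subtype := by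
    intro R₁ R₂
    apply le_antisymm
    · rintro x ⟨⟨a, b⟩, ⟨ha, hb⟩, rfl⟩
      rw [hφ]
      exact mul_mem
        ((le_sup_left : R₁.map G₁.subtype ≤ _) ⟨a, ha, rfl⟩)
        ((le_sup_right : R₂.map G₂.subtype ≤ _) ⟨b, hb, rfl⟩)
    · refine sup_le ?_ ?_
      · rintro x ⟨a, ha, rfl⟩
        exact ⟨(a, 1), ⟨ha, R₂.one_mem⟩, by rw [hφ]; simp⟩
      · rintro x ⟨b, hb, rfl⟩
        exact ⟨(1, b), ⟨R₁.one_mem, hb⟩, by rw [hφ]; simp⟩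
  have hker_le : ∀ (R₁ : Subgroup G₁) (R₂ : Subgroup G₂),
      IsCartan R₁ → IsCartan R₂ → φ.ker ≤ R₁.prod R₂ := by
    intro R₁ R₂ h1 h2 p hp
    obtain ⟨hc1, hc2⟩ := hkercen p hp
    exact ⟨CartanAux.center_le_max_nilpotent h1.1.1 h1.1.2 hc1,
      CartanAux.center_le_max_nilpotent h2.1.1 h2.1.2 hc2⟩
  rw [← CartanAux.isCartan_comap_iff hsurj hker_center Q, CartanAux.isCartan_prod_iff]
  constructor
  · rintro ⟨R₁, R₂, h1, h2, heq⟩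
    refine ⟨R₁, R₂, h1, h2, ?_⟩
    rw [← Subgroup.map_comap_eq_self_of_surjective hsurj Q, heq, hmap]
  · rintro ⟨R₁, R₂, h1, h2, rfl⟩
    refine ⟨R₁, R₂, h1, h2, ?_⟩
    rw [← hmap, Subgroup.comap_map_eq, sup_eq_left.mpr (hker_le R₁ R₂ h1 h2)]
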